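/- Every acyclic structured production system is coherent: if ζ admits no cycles, then the matrix Z representing ζ is nonsingular; indeed det Z > 0. -/

import Mathlib

open Finset

/-- Every acyclic structured production system is coherent: the matrix `Z`
representing the professional production system is nonsingular; in fact `det Z > 0`. -/
theorem acyclic_implies_coherent
    (ℓ : ℕ) (Q : Fin ℓ → ℝ) (y : Fin ℓ → Fin ℓ → ℝ)
    (hQ : ∀ k, 0 < Q k) (hy : ∀ k j, 0 ≤ y k j) (hyk : ∀ k, y k k = 0)
    (hacyc : ∀ (m : ℕ) (k : Fin (m + 2) → Fin ℓ), Function.Injective k →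
      y (k 0) (k (Fin.last (m + 1))) *
        ∏ i : Fin (m + 1), y (k i.succ) (k i.castSucc) = 0)
    (Z : Matrix (Fin ℓ) (Fin ℓ) ℝ)
    (hZ : ∀ k j, Z k j = (if j = k then Q k else 0) - y k j) :
    0 < Z.det := by
  have key : ∀ σ : Equiv.Perm (Fin ℓ), σ ≠ 1 → ∏ i, Z (σ i) i = 0 := by
    intro σ hσ
    obtain ⟨k₀, hk₀⟩ : ∃ x, σ x ≠ x := by
      by_contra h
      push_neg at h
      exact hσ (Equiv.ext fun x => h x)
    -- c = length of the cycle of σ through k₀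
    set c := Function.minimalPeriod σ k₀ with hc
    have hper : Function.IsPeriodicPt σ (orderOf σ) k₀ := by
      rw [Function.IsPeriodicPt, Function.IsFixedPt, Equiv.Perm.iterate_eq_pow,
        pow_orderOf_eq_one]
      rfl
    have hcpos : 0 < c := hper.minimalPeriod_pos (orderOf_pos σ)
    have hcne1 : c ≠ 1 := fun h =>
      hk₀ (Function.minimalPeriod_eq_one_iff_isFixedPt.mp h)
    have hc2 : 2 ≤ c := by omega
    obtain ⟨m, hm⟩ : ∃ m, c = m + 2 := ⟨c - 2, by omega⟩
    have hinj : Set.InjOn (σ^[·] k₀) (Set.Iio c) :=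
      Function.iterate_injOn_Iio_minimalPeriod
    set k : Fin (m + 2) → Fin ℓ := fun i => σ^[(i : ℕ)] k₀ with hkdef
    have hkinj : Function.Injective k := by
      intro a b hab
      have : (a : ℕ) = (b : ℕ) := hinj (by simp [hm, a.isLt]) (by simp [hm, b.isLt]) hab
      exact Fin.ext this
    have hcycle : σ^[c] k₀ = k₀ := Function.isPeriodicPt_minimalPeriod σ k₀
    have hzero := hacyc m k hkinj
    -- each factor is of the form y (σ x) x for some x in the orbit
    have hs : σ ((⇑σ)^[m + 1] k₀) = k₀ := by
      have h2 := Function.iterate_succ_apply' σ (m + 1) k₀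
      rw [hm] at hcycle
      rw [← h2]; exact hcycle
    have h0 : y (k 0) (k (Fin.last (m + 1))) = y (σ ((⇑σ)^[m + 1] k₀)) ((⇑σ)^[m + 1] k₀) := by
      rw [hs]
      simp [hkdef, Fin.last, pow_succ, Equiv.Perm.mul_apply]
    have h1 : ∀ i : Fin (m + 1), y (k i.succ) (k i.castSucc)
        = y (σ ((⇑σ)^[(i : ℕ)] k₀)) ((⇑σ)^[(i : ℕ)] k₀) := by
      intro i
      simp [hkdef, pow_succ', Equiv.Perm.mul_apply]
      rw [← Function.iterate_succ_apply, Function.iterate_succ_apply']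
    rw [h0, Finset.prod_congr rfl (fun i _ => h1 i)] at hzero
    -- extract a zero factor
    obtain ⟨x, hxlt, hyx⟩ : ∃ j, j < c ∧ y (σ ((⇑σ)^[j] k₀)) ((⇑σ)^[j] k₀) = 0 := by
      rcases mul_eq_zero.mp hzero with h | h
      · exact ⟨m + 1, by omega, h⟩
      · obtain ⟨i, _, hi⟩ := Finset.prod_eq_zero_iff.mp h
        exact ⟨(i : ℕ), by omega, hi⟩
    have hne : σ ((⇑σ)^[x] k₀) ≠ (⇑σ)^[x] k₀ := by
      intro heq
      have hsx : σ ((⇑σ)^[x] k₀) = (⇑σ)^[x + 1] k₀ :=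
        (Function.iterate_succ_apply' σ x k₀).symm
      rcases Nat.lt_or_ge (x + 1) c with hlt | hge
      · have heq2 : (⇑σ)^[x + 1] k₀ = (⇑σ)^[x] k₀ := by rw [← hsx]; exact heq
        have := hinj (Set.mem_Iio.mpr hlt) (Set.mem_Iio.mpr hxlt) heq2
        omega
      · have hxc : x + 1 = c := by omega
        have hσx : σ ((⇑σ)^[x] k₀) = k₀ := by rw [hsx, hxc, hcycle]
        have heq2 : (⇑σ)^[0] k₀ = (⇑σ)^[x] k₀ := by
          simpa using hσx.symm.trans heq
        have := hinj (Set.mem_Iio.mpr hcpos) (Set.mem_Iio.mpr hxlt) heq2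
        omega
    refine Finset.prod_eq_zero (Finset.mem_univ ((⇑σ)^[x] k₀)) ?_
    rw [hZ]
    rw [if_neg (fun h => hne h.symm), hyx]
    ring
  rw [Matrix.det_apply]
  rw [Finset.sum_eq_single 1]
  · simp only [Equiv.Perm.sign_one, one_smul, Equiv.Perm.one_apply]
    have : ∀ i : Fin ℓ, Z i i = Q i := by
      intro i; rw [hZ, if_pos rfl, hyk]; ring
    rw [Finset.prod_congr rfl (fun i _ => this i)]
    exact Finset.prod_pos (fun i _ => hQ i)
  · intro σ _ hσ
    rw [key σ hσ, smul_zero]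
  · intro h
    exact absurd (Finset.mem_univ 1) h
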